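/- Let x_{k-1} = B_{k-1} Σ_{i=1}^{k-1} A_iᵀ b_i where B_{k-1} = (λ_{k-1} LᵀL + Σ_{i=1}^{k-1} A_iᵀA_i)^{-1} and λ_{k-1} = Σ_{i=1}^{k-1} Λ_i > 0. Define x_k = x_{k-1} − B_k (A_kᵀ(A_k x_{k-1} − b_k) + Λ_k LᵀL x_{k-1}) with B_k = (λ_k LᵀL + Σ_{i=1}^{k} A_iᵀA_i)^{-1}, λ_k = λ_{k-1} + Λ_k > 0. Then x_k = B_k Σ_{i=1}^{k} A_iᵀ b_i. -/

import Mathlib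

open Matrix Finset

lemma sTik_mulVec_inj_of_rank {n s : ℕ} (L : Matrix (Fin s) (Fin n) ℝ) (hL : L.rank = n) :
    Function.Injective L.mulVec := by
  have hrn := LinearMap.finrank_range_add_finrank_ker (L.mulVecLin)
  have h1 : Module.finrank ℝ (LinearMap.range L.mulVecLin) = n := by
    simpa [Matrix.rank] using hL
  rw [h1, Module.finrank_pi] at hrn
  simp only [Fintype.card_fin] at hrn
  have hker : LinearMap.ker L.mulVecLin = ⊥ := by
    apply Submodule.finrank_eq_zero.mp
    omega
  have := LinearMap.ker_eq_bot.mp hker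
  exact this

lemma sTik_posdef_smul_tt {n s : ℕ} (L : Matrix (Fin s) (Fin n) ℝ) (hL : L.rank = n)
    {c : ℝ} (hc : 0 < c) : (c • (Lᵀ * L)).PosDef := by
  refine Matrix.PosDef.of_dotProduct_mulVec_pos ?_ ?_
  · have h := (Matrix.posSemidef_conjTranspose_mul_self L).1
    have h' : (Lᵀ * L).IsHermitian := by simpa using h
    simp only [Matrix.IsHermitian, Matrix.conjTranspose_smul] at h' ⊢
    rw [h']
    simp
  · intro x hx
    have hLx : L *ᵥ x ≠ 0 := by
      intro h
      exact hx (sTik_mulVec_inj_of_rank L hL (h.trans (L.mulVec_zero).symm))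
    have key : star x ⬝ᵥ (c • (Lᵀ * L)) *ᵥ x = c * ((L *ᵥ x) ⬝ᵥ (L *ᵥ x)) := by
      rw [Matrix.smul_mulVec, dotProduct_smul, ← Matrix.mulVec_mulVec,
        Matrix.dotProduct_mulVec, Matrix.vecMul_transpose]
      simp [smul_eq_mul]
    rw [key]
    have hpos : 0 < (L *ᵥ x) ⬝ᵥ (L *ᵥ x) := by
      have := Matrix.dotProduct_star_self_pos_iff (v := L *ᵥ x) |>.mpr hLx
      simpa using this
    positivity

lemma sTik_psd_sum {n ℓ : ℕ} (Ai : ℕ → Matrix (Fin ℓ) (Fin n) ℝ) (m : ℕ) :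
    (∑ i ∈ Finset.range m, (Ai i)ᵀ * Ai i).PosSemidef := by
  induction m with
  | zero => simpa using Matrix.PosSemidef.zero
  | succ m ih =>
    rw [Finset.sum_range_succ]
    exact ih.add (by simpa using Matrix.posSemidef_conjTranspose_mul_self (Ai m))

/-- single-step induction: if `x_{k-1} = B_{k-1} Σ_{i<k} A_iᵀ b_i`, then the
sampled Tikhonov update produces `x_k = B_k Σ_{i≤k} A_iᵀ b_i`. (0-based: step from `k` to
`k+1` blocks.) -/
theorem sTik_single_step
    {n s ℓ : ℕ} (k : ℕ)
    (L : Matrix (Fin s) (Fin n) ℝ) (hL : L.rank = n)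
    (Ai : ℕ → Matrix (Fin ℓ) (Fin n) ℝ) (bi : ℕ → Fin ℓ → ℝ)
    (Lam : ℕ → ℝ) (lam : ℕ → ℝ)
    (hlamdef : ∀ j, lam j = ∑ i ∈ Finset.range j, Lam i)
    (hprev : 0 < lam k) (hcur : 0 < lam (k + 1))
    (Bprev Bcur : Matrix (Fin n) (Fin n) ℝ)
    (hBprev : Bprev = (lam k • (Lᵀ * L) + ∑ i ∈ Finset.range k, (Ai i)ᵀ * Ai i)⁻¹)
    (hBcur : Bcur = (lam (k + 1) • (Lᵀ * L) + ∑ i ∈ Finset.range (k + 1), (Ai i)ᵀ * Ai i)⁻¹)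
    (xprev xcur : Fin n → ℝ)
    (hxprev : xprev = Bprev.mulVec (∑ i ∈ Finset.range k, (Ai i)ᵀ.mulVec (bi i)))
    (hxcur : xcur = xprev - Bcur.mulVec
      ((Ai k)ᵀ.mulVec ((Ai k).mulVec xprev - bi k) + Lam k • (Lᵀ * L).mulVec xprev)) :
    xcur = Bcur.mulVec (∑ i ∈ Finset.range (k + 1), (Ai i)ᵀ.mulVec (bi i)) := by
  set Mp : Matrix (Fin n) (Fin n) ℝ :=
    lam k • (Lᵀ * L) + ∑ i ∈ Finset.range k, (Ai i)ᵀ * Ai i with hMp_def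
  set Mc : Matrix (Fin n) (Fin n) ℝ :=
    lam (k + 1) • (Lᵀ * L) + ∑ i ∈ Finset.range (k + 1), (Ai i)ᵀ * Ai i with hMc_def
  have hMp : Mp.PosDef :=
    (sTik_posdef_smul_tt L hL hprev).add_posSemidef (sTik_psd_sum Ai k)
  have hMc : Mc.PosDef :=
    (sTik_posdef_smul_tt L hL hcur).add_posSemidef (sTik_psd_sum Ai (k + 1))
  have hMpdet : IsUnit Mp.det := (Matrix.isUnit_iff_isUnit_det _).mp hMp.isUnit
  have hMcdet : IsUnit Mc.det := (Matrix.isUnit_iff_isUnit_det _).mp hMc.isUnit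
  -- M_prev x_prev = Σ_{i<k} A_iᵀ b_i
  have hMpx : Mp *ᵥ xprev = ∑ i ∈ Finset.range k, (Ai i)ᵀ.mulVec (bi i) := by
    rw [hxprev, hBprev, Matrix.mulVec_mulVec,
      Matrix.mul_nonsing_inv _ hMpdet, Matrix.one_mulVec]
  -- lam (k+1) = lam k + Lam k
  have hlam : lam (k + 1) = lam k + Lam k := by
    rw [hlamdef, hlamdef, Finset.sum_range_succ]
  -- decompose Mc
  have hMc_eq : Mc = Mp + ((Ai k)ᵀ * Ai k + Lam k • (Lᵀ * L)) := by
    rw [hMc_def, hMp_def, Finset.sum_range_succ, hlam, add_smul]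
    abel
  -- xprev = Bcur *ᵥ (Mc *ᵥ xprev)
  have hxp : xprev = Bcur *ᵥ (Mc *ᵥ xprev) := by
    rw [hBcur, Matrix.mulVec_mulVec, Matrix.nonsing_inv_mul _ hMcdet,
      Matrix.one_mulVec]
  have h1 : ((Ai k)ᵀ * Ai k) *ᵥ xprev = (Ai k)ᵀ *ᵥ ((Ai k) *ᵥ xprev) :=
    (Matrix.mulVec_mulVec _ _ _).symm
  have h2 : (Lam k • (Lᵀ * L)) *ᵥ xprev = Lam k • ((Lᵀ * L) *ᵥ xprev) :=
    Matrix.smul_mulVec _ _ _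
  have key : Mc *ᵥ xprev -
      ((Ai k)ᵀ *ᵥ (Ai k *ᵥ xprev - bi k) + Lam k • (Lᵀ * L) *ᵥ xprev)
      = ∑ i ∈ Finset.range (k + 1), (Ai i)ᵀ *ᵥ bi i := by
    rw [hMc_eq, Matrix.add_mulVec, hMpx, Matrix.add_mulVec, h1, h2, Matrix.mulVec_sub,
      Finset.sum_range_succ]
    abel
  rw [hxcur]
  calc xprev - Bcur *ᵥ ((Ai k)ᵀ *ᵥ (Ai k *ᵥ xprev - bi k) + Lam k • (Lᵀ * L) *ᵥ xprev)
      = Bcur *ᵥ (Mc *ᵥ xprev)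
        - Bcur *ᵥ ((Ai k)ᵀ *ᵥ (Ai k *ᵥ xprev - bi k) + Lam k • (Lᵀ * L) *ᵥ xprev) := by
        rw [← hxp]
    _ = Bcur *ᵥ (Mc *ᵥ xprev
        - ((Ai k)ᵀ *ᵥ (Ai k *ᵥ xprev - bi k) + Lam k • (Lᵀ * L) *ᵥ xprev)) :=
        (Matrix.mulVec_sub _ _ _).symm
    _ = _ := by rw [key]
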